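/- Let C be a C*-algebra, A ⊆ C a closed *-subalgebra, X ⊆ C a closed subspace with AX ⊆ X, XA ⊆ X, X*X ⊆ A, XX* ⊆ A, and suppose X is right full, i.e., X*·X = A (closed span). Then X^{-k}·X^{l} = X^{l-k} for all integers k, l ≥ 0, where X^m denotes the m-fold closed-span power (X^0 = A, negative powers via the adjoint). -/

import Mathlib

variable {C : Type*} [NonUnitalCStarAlgebra C]

/-- `mulSpan X Y` is the closed linear span of the elementwise products `{x * y}`. -/
def mulSpan (X Y : Set C) : Set C :=
  closure (Submodule.span ℂ {z : C | ∃ x ∈ X, ∃ y ∈ Y, z = x * y} : Set C)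

/-- `addCl X Y` is the closure of the set of elementwise sums. -/
def addCl (X Y : Set C) : Set C :=
  closure {z : C | ∃ x ∈ X, ∃ y ∈ Y, z = x + y}

/-- `sumCl X` is the closure of the set of finite sums from the family `X`. -/
def sumCl {ι : Type*} (X : ι → Set C) : Set C :=
  closure {z : C | ∃ (s : Finset ι) (f : ι → C), (∀ i ∈ s, f i ∈ X i) ∧ z = ∑ i ∈ s, f i}

/-- `npowSet X n` is the `(n+1)`-fold closed-span product `X · X ⋯ X`. -/
def npowSet (X : Set C) : ℕ → Set C
  | 0 => X
  | n + 1 => mulSpan (npowSet X n) X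

/-- Integer powers: `X^k` for `k ≥ 1`, `X^0 = A`, `X^k = (X*)^(-k)` for `k ≤ -1`. -/
def zpowSet (A X : Set C) (k : ℤ) : Set C :=
  if k = 0 then A
  else if 0 < k then npowSet X (k.toNat - 1)
  else npowSet ((star ·) '' X) ((-k).toNat - 1)

/-! ### Auxiliary machinery -/

open scoped Pointwise ContinuousMapZero

section Aux

/-- The (non-closed) span of products of two submodules. -/
private def sprod (S T : Submodule ℂ C) : Submodule ℂ C :=
  Submodule.span ℂ ((S : Set C) * (T : Set C))

private lemma mem_sprod {S T : Submodule ℂ C} {s t : C} (hs : s ∈ S) (ht : t ∈ T) :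
    s * t ∈ sprod S T :=
  Submodule.subset_span (Set.mul_mem_mul hs ht)

private lemma sprod_le {S T U : Submodule ℂ C} (h : ∀ s ∈ S, ∀ t ∈ T, s * t ∈ U) :
    sprod S T ≤ U := by
  rw [sprod, Submodule.span_le]
  rintro _ ⟨s, hs, t, ht, rfl⟩
  exact h s hs t ht

private lemma sprod_assoc (S T U : Submodule ℂ C) :
    sprod (sprod S T) U = sprod S (sprod T U) := by
  apply le_antisymm
  · refine sprod_le fun x hx u hu => ?_
    induction hx using Submodule.span_induction with
    | mem z hz =>
        obtain ⟨s, hs, t, ht, rfl⟩ := hz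
        rw [mul_assoc]
        exact mem_sprod hs (mem_sprod ht hu)
    | zero => rw [zero_mul]; exact zero_mem _
    | add x y _ _ hx hy => rw [add_mul]; exact add_mem hx hy
    | smul c x _ hx => rw [smul_mul_assoc]; exact Submodule.smul_mem _ c hx
  · refine sprod_le fun s hs x hx => ?_
    induction hx using Submodule.span_induction with
    | mem z hz =>
        obtain ⟨t, ht, u, hu, rfl⟩ := hz
        rw [← mul_assoc]
        exact mem_sprod (mem_sprod hs ht) hu
    | zero => rw [mul_zero]; exact zero_mem _
    | add x y _ _ hx hy => rw [mul_add]; exact add_mem hx hy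
    | smul c x _ hx => rw [mul_smul_comm]; exact Submodule.smul_mem _ c hx

/-- The closed span of products of two submodules. -/
private noncomputable def Qm (S T : Submodule ℂ C) : Submodule ℂ C :=
  (sprod S T).topologicalClosure

private lemma mulSpan_eq (S T : Submodule ℂ C) :
    mulSpan (S : Set C) (T : Set C) = ((Qm S T : Submodule ℂ C) : Set C) := by
  have hset : {z : C | ∃ x ∈ (S : Set C), ∃ y ∈ (T : Set C), z = x * y}
      = (S : Set C) * (T : Set C) := by
    ext z
    constructor
    · rintro ⟨x, hx, y, hy, rfl⟩
      exact Set.mul_mem_mul hx hy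
    · rintro ⟨x, hx, y, hy, rfl⟩
      exact ⟨x, hx, y, hy, rfl⟩
  rw [mulSpan, hset, Qm, Submodule.topologicalClosure_coe, sprod]

private lemma tc_mul_left (S T : Submodule ℂ C) :
    (sprod S.topologicalClosure T).topologicalClosure = (sprod S T).topologicalClosure := by
  refine le_antisymm (Submodule.topologicalClosure_minimal _ ?_
      (sprod S T).isClosed_topologicalClosure)
    (Submodule.topologicalClosure_mono (Submodule.span_mono
      (Set.mul_subset_mul_right fun x hx => S.le_topologicalClosure hx)))
  refine sprod_le fun s hs t ht => ?_
  have hs' : s ∈ closure (S : Set C) := by rwa [← Submodule.topologicalClosure_coe]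
  have : s * t ∈ closure ((sprod S T : Submodule ℂ C) : Set C) :=
    map_mem_closure (f := fun y => y * t) (continuous_mul_right t) hs'
      (fun x hx => mem_sprod hx ht)
  rwa [← Submodule.topologicalClosure_coe] at this

private lemma tc_mul_right (S T : Submodule ℂ C) :
    (sprod S T.topologicalClosure).topologicalClosure = (sprod S T).topologicalClosure := by
  refine le_antisymm (Submodule.topologicalClosure_minimal _ ?_
      (sprod S T).isClosed_topologicalClosure)
    (Submodule.topologicalClosure_mono (Submodule.span_mono
      (Set.mul_subset_mul_left fun x hx => T.le_topologicalClosure hx)))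
  refine sprod_le fun s hs t ht => ?_
  have ht' : t ∈ closure (T : Set C) := by rwa [← Submodule.topologicalClosure_coe]
  have : s * t ∈ closure ((sprod S T : Submodule ℂ C) : Set C) :=
    map_mem_closure (f := fun y => s * y) (continuous_mul_left s) ht'
      (fun x hx => mem_sprod hs hx)
  rwa [← Submodule.topologicalClosure_coe] at this

private lemma Qm_assoc (S T U : Submodule ℂ C) : Qm (Qm S T) U = Qm S (Qm T U) := by
  unfold Qm
  rw [tc_mul_left, tc_mul_right, sprod_assoc]

private lemma Qm_le {S T U : Submodule ℂ C} (hU : IsClosed (U : Set C))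
    (h : ∀ s ∈ S, ∀ t ∈ T, s * t ∈ U) : Qm S T ≤ U :=
  Submodule.topologicalClosure_minimal _ (sprod_le h) hU

private lemma mem_Qm_of_approx {S T : Submodule ℂ C} {x : C}
    (h : ∀ ε : ℝ, 0 < ε → ∃ s ∈ S, ∃ t ∈ T, ‖x - s * t‖ < ε) : x ∈ Qm S T := by
  have : x ∈ closure ((sprod S T : Submodule ℂ C) : Set C) := by
    refine Metric.mem_closure_iff.mpr fun ε hε => ?_
    obtain ⟨s, hs, t, ht, hst⟩ := h ε hε
    exact ⟨s * t, mem_sprod hs ht, by rwa [dist_eq_norm]⟩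
  rwa [← Submodule.topologicalClosure_coe] at this

/-- The image of a submodule under `star`, as a submodule. -/
private def starSub (X : Submodule ℂ C) : Submodule ℂ C where
  carrier := (star ·) '' (X : Set C)
  add_mem' := by
    rintro a b ⟨x, hx, rfl⟩ ⟨y, hy, rfl⟩
    exact ⟨x + y, X.add_mem hx hy, star_add x y⟩
  zero_mem' := ⟨0, X.zero_mem, star_zero C⟩
  smul_mem' := by
    rintro c a ⟨x, hx, rfl⟩
    refine ⟨star c • x, X.smul_mem _ hx, ?_⟩
    show star (star c • x) = c • star x
    rw [star_smul, star_star]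

private lemma mem_starSub {X : Submodule ℂ C} {z : C} :
    z ∈ starSub X ↔ ∃ x ∈ X, star x = z :=
  Iff.rfl

private lemma starSub_isClosed {X : Submodule ℂ C} (hX : IsClosed (X : Set C)) :
    IsClosed ((starSub X : Submodule ℂ C) : Set C) := by
  have h : ((starSub X : Submodule ℂ C) : Set C) = (star ·) ⁻¹' (X : Set C) := by
    ext z
    constructor
    · rintro ⟨x, hx, rfl⟩
      simpa [star_star] using hx
    · intro hz
      exact ⟨star z, hz, star_star z⟩
  rw [h]
  exact hX.preimage continuous_star

/-! ### The C⋆-approximation lemmas -/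

set_option maxHeartbeats 1000000 in
private lemma cfcnHom_mem' (A : NonUnitalStarSubalgebra ℂ C) (hA : IsClosed (A : Set C))
    {a : C} (haA : a ∈ A) (ha : IsSelfAdjoint a) (f : C(quasispectrum ℝ a, ℝ)₀) :
    cfcₙHom (R := ℝ) ha f ∈ A := by
  have h0 : ((0 : quasispectrum ℝ a) : ℝ) = 0 := rfl
  have hid : cfcₙHom (R := ℝ) ha (ContinuousMapZero.id (quasispectrum ℝ a)) = a := cfcₙHom_id ha
  induction f using ContinuousMapZero.induction_on_of_compact with
  | zero => rw [map_zero]; exact A.zero_mem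
  | id => rw [hid]; exact haA
  | star_id => rw [map_star, hid]; exact star_mem haA
  | add f g hf hg => rw [map_add]; exact A.add_mem hf hg
  | mul f g hf hg => rw [map_mul]; exact A.mul_mem hf hg
  | smul r f hf => rw [map_smul]; exact A.smul_mem r hf
  | frequently f hf =>
      have ht : Filter.Tendsto (cfcₙHom (R := ℝ) ha) (nhds f) (nhds (cfcₙHom (R := ℝ) ha f)) :=
        (cfcₙHom_continuous ha).tendsto f
      have hcl : cfcₙHom (R := ℝ) ha f ∈ closure (A : Set C) :=
        mem_closure_iff_frequently.mpr (ht.frequently hf)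
      rwa [hA.closure_eq] at hcl

private lemma cfcn_mem' (A : NonUnitalStarSubalgebra ℂ C) (hA : IsClosed (A : Set C))
    {a : C} (haA : a ∈ A) (ha : IsSelfAdjoint a) {f : ℝ → ℝ} (hf : Continuous f)
    (hf0 : f 0 = 0) : cfcₙ f a ∈ A := by
  rw [cfcₙ_apply f a hf.continuousOn hf0 ha]
  exact cfcnHom_mem' A hA haA ha _

private lemma approx_right' (A : NonUnitalStarSubalgebra ℂ C) (hA : IsClosed (A : Set C))
    (b : C) (hb : star b * b ∈ A) {ε : ℝ} (hε : 0 < ε) :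
    ∃ a ∈ A, ‖b - b * a‖ < ε := by
  set c := star b * b with hc
  have hsa : IsSelfAdjoint c := IsSelfAdjoint.star_mul_self b
  set d : ℝ := ε ^ 2 with hd_def
  have hd : 0 < d := by positivity
  set f : ℝ → ℝ := fun t => t ^ 2 / (d ^ 2 + t ^ 2) with hf_def
  have hden : ∀ t : ℝ, 0 < d ^ 2 + t ^ 2 := fun t =>
    add_pos_of_pos_of_nonneg (pow_pos hd 2) (sq_nonneg t)
  have hfc : Continuous f := by
    apply Continuous.div (by fun_prop) (by fun_prop) (fun t => (hden t).ne')
  have hf0 : f 0 = 0 := by simp [hf_def]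
  set u : C := cfcₙ f c with hu_def
  have huA : u ∈ A := cfcn_mem' A hA hb hsa hfc hf0
  have husa : IsSelfAdjoint u := cfcₙ_predicate f c
  have key : star (b - b * u) * (b - b * u) = c - c * u - u * c + u * c * u := by
    simp only [star_sub, star_mul, husa.star_eq, hc]
    noncomm_ring
  set g : ℝ → ℝ := fun t => t - t * f t - f t * t + f t * t * f t with hg_def
  have hgc : Continuous g := by fun_prop
  have hg0 : g 0 = 0 := by simp [hg_def, hf0]
  have h1 : cfcₙ (fun t : ℝ => t * f t) c = c * u := by
    rw [cfcₙ_mul (fun t : ℝ => t) f c (continuous_id.continuousOn) rfl hfc.continuousOn hf0,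
      cfcₙ_id' ℝ c]
  have h2 : cfcₙ (fun t : ℝ => f t * t) c = u * c := by
    rw [cfcₙ_mul f (fun t : ℝ => t) c hfc.continuousOn hf0 (continuous_id.continuousOn) rfl,
      cfcₙ_id' ℝ c]
  have h3 : cfcₙ (fun t : ℝ => f t * t * f t) c = u * c * u := by
    rw [cfcₙ_mul (fun t : ℝ => f t * t) f c (by fun_prop) (by simp [hf0]) hfc.continuousOn hf0, h2]
  have hgcfc : cfcₙ g c = c - c * u - u * c + u * c * u := by
    rw [hg_def]
    rw [cfcₙ_add (fun t : ℝ => t - t * f t - f t * t) (fun t : ℝ => f t * t * f t) c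
      (by fun_prop) (by simp [hf0]) (by fun_prop) (by simp [hf0])]
    rw [cfcₙ_sub (fun t : ℝ => t - t * f t) (fun t : ℝ => f t * t) c
      (by fun_prop) (by simp [hf0]) (by fun_prop) (by simp [hf0])]
    rw [cfcₙ_sub (fun t : ℝ => t) (fun t : ℝ => t * f t) c
      (continuous_id.continuousOn) rfl (by fun_prop) (by simp [hf0])]
    rw [cfcₙ_id' ℝ c, h1, h2, h3]
  have hbound : ∀ t : ℝ, ‖g t‖ ≤ d / 2 := by
    intro t
    have hgt : g t = t * d ^ 4 / (d ^ 2 + t ^ 2) ^ 2 := by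
      rw [hg_def]
      simp only [hf_def]
      field_simp
      ring
    rw [Real.norm_eq_abs, hgt, abs_div, abs_of_pos (pow_pos (hden t) 2), abs_mul]
    rw [div_le_iff₀ (pow_pos (hden t) 2)]
    have hs : t ^ 2 = |t| ^ 2 := (sq_abs t).symm
    have habs : |d ^ 4| = d ^ 4 := abs_of_pos (by positivity)
    rw [habs, hs]
    nlinarith [abs_nonneg t, mul_nonneg hd.le (sq_nonneg (d ^ 2 - |t| * d)),
      mul_nonneg hd.le (sq_nonneg (d * |t|)), mul_nonneg hd.le (sq_nonneg (|t| ^ 2))]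
  have hnorm : ‖cfcₙ g c‖ ≤ d / 2 := norm_cfcₙ_le fun t _ => hbound t
  have hsq : ‖b - b * u‖ ^ 2 ≤ d / 2 := by
    calc ‖b - b * u‖ ^ 2 = ‖star (b - b * u) * (b - b * u)‖ := by
          rw [CStarRing.norm_star_mul_self, sq]
      _ = ‖cfcₙ g c‖ := by rw [key, hgcfc]
      _ ≤ d / 2 := hnorm
  refine ⟨u, huA, ?_⟩
  nlinarith [norm_nonneg (b - b * u), hsq, hε]

private lemma approx_left' (A : NonUnitalStarSubalgebra ℂ C) (hA : IsClosed (A : Set C))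
    (b : C) (hb : b * star b ∈ A) {ε : ℝ} (hε : 0 < ε) :
    ∃ a ∈ A, ‖b - a * b‖ < ε := by
  obtain ⟨u, huA, hu⟩ := approx_right' A hA (star b) (by rwa [star_star]) hε
  refine ⟨star u, star_mem huA, ?_⟩
  have h : b - star u * b = star (star b - star b * u) := by
    simp [star_sub, star_mul, star_star]
  rw [h, norm_star]
  exact hu

/-- Powers of a submodule. -/
private noncomputable def Pn (X : Submodule ℂ C) : ℕ → Submodule ℂ C
  | 0 => X
  | n + 1 => Qm (Pn X n) X

private lemma npow_eq (X : Submodule ℂ C) :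
    ∀ n, npowSet (X : Set C) n = ((Pn X n : Submodule ℂ C) : Set C)
  | 0 => rfl
  | n + 1 => by
      rw [npowSet, npow_eq X n, mulSpan_eq]
      rfl

end Aux

/-- If `X` is right full then `X^(-k) · X^l = X^(l-k)` for all `k, l ≥ 0`. -/
theorem zpowSet_mul_of_rightFull (A : NonUnitalStarSubalgebra ℂ C) (hA : IsClosed (A : Set C))
    (X : Submodule ℂ C) (hX : IsClosed (X : Set C))
    (hAX : ∀ a ∈ A, ∀ x ∈ X, a * x ∈ X) (hXA : ∀ x ∈ X, ∀ a ∈ A, x * a ∈ X)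
    (hXsX : ∀ x ∈ X, ∀ y ∈ X, star x * y ∈ A) (hXXs : ∀ x ∈ X, ∀ y ∈ X, x * star y ∈ A)
    (hfull : mulSpan ((star ·) '' (X : Set C)) (X : Set C) = (A : Set C)) (k l : ℕ) :
    mulSpan (zpowSet (A : Set C) (X : Set C) (-(k : ℤ)))
        (zpowSet (A : Set C) (X : Set C) (l : ℤ))
      = zpowSet (A : Set C) (X : Set C) ((l : ℤ) - (k : ℤ)) := by
  classical
  set A' : Submodule ℂ C := A.toNonUnitalSubalgebra.toSubmodule with hA'def
  have hA'coe : ((A' : Submodule ℂ C) : Set C) = (A : Set C) := rfl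
  have hA'mem : ∀ {a : C}, a ∈ A' ↔ a ∈ A := Iff.rfl
  have hAcl : IsClosed ((A' : Submodule ℂ C) : Set C) := hA
  set Xs : Submodule ℂ C := starSub X with hXsdef
  have hXscl : IsClosed ((Xs : Submodule ℂ C) : Set C) := starSub_isClosed hX
  -- basic product identities
  have hQAA : Qm A' A' = A' := by
    refine le_antisymm (Qm_le hAcl fun s hs t ht =>
      hA'mem.mpr (mul_mem (hA'mem.mp hs) (hA'mem.mp ht))) ?_
    intro a ha
    refine mem_Qm_of_approx fun ε hε => ?_
    obtain ⟨u, huA, hu⟩ := approx_right' A hA a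
      (mul_mem (star_mem (hA'mem.mp ha)) (hA'mem.mp ha)) hε
    exact ⟨a, ha, u, huA, hu⟩
  have hQXA : Qm X A' = X := by
    refine le_antisymm (Qm_le hX fun x hx a ha => hXA x hx a ha) ?_
    intro x hx
    refine mem_Qm_of_approx fun ε hε => ?_
    obtain ⟨u, huA, hu⟩ := approx_right' A hA x (hXsX x hx x hx) hε
    exact ⟨x, hx, u, huA, hu⟩
  have hQAX : Qm A' X = X := by
    refine le_antisymm (Qm_le hX fun a ha x hx => hAX a ha x hx) ?_
    intro x hx
    refine mem_Qm_of_approx fun ε hε => ?_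
    obtain ⟨u, huA, hu⟩ := approx_left' A hA x (hXXs x hx x hx) hε
    exact ⟨u, huA, x, hx, hu⟩
  have hQXsA : Qm Xs A' = Xs := by
    refine le_antisymm (Qm_le hXscl ?_) ?_
    · intro z hz a ha
      obtain ⟨x, hx, rfl⟩ := mem_starSub.mp hz
      exact mem_starSub.mpr ⟨star a * x, hAX (star a) (star_mem (hA'mem.mp ha)) x hx,
        by rw [star_mul, star_star]⟩
    · intro z hz
      obtain ⟨x, hx, rfl⟩ := mem_starSub.mp hz
      refine mem_Qm_of_approx fun ε hε => ?_
      obtain ⟨u, huA, hu⟩ := approx_right' A hA (star x)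
        (by rw [star_star]; exact hXXs x hx x hx) hε
      exact ⟨star x, mem_starSub.mpr ⟨x, hx, rfl⟩, u, huA, hu⟩
  have hQAXs : Qm A' Xs = Xs := by
    refine le_antisymm (Qm_le hXscl ?_) ?_
    · intro a ha z hz
      obtain ⟨x, hx, rfl⟩ := mem_starSub.mp hz
      exact mem_starSub.mpr ⟨x * star a, hXA x hx (star a) (star_mem (hA'mem.mp ha)),
        by rw [star_mul, star_star]⟩
    · intro z hz
      obtain ⟨x, hx, rfl⟩ := mem_starSub.mp hz
      refine mem_Qm_of_approx fun ε hε => ?_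
      obtain ⟨u, huA, hu⟩ := approx_left' A hA (star x)
        (by rw [star_star]; exact hXsX x hx x hx) hε
      exact ⟨u, huA, star x, mem_starSub.mpr ⟨x, hx, rfl⟩, hu⟩
  have hfull' : Qm Xs X = A' := by
    apply SetLike.coe_injective
    rw [← mulSpan_eq]
    exact hfull
  -- structural lemmas about powers
  have hPleft : ∀ n, Qm X (Pn X n) = Pn X (n + 1) := by
    intro n
    induction n with
    | zero => rfl
    | succ n ih =>
        calc Qm X (Pn X (n + 1)) = Qm X (Qm (Pn X n) X) := rfl
          _ = Qm (Qm X (Pn X n)) X := (Qm_assoc _ _ _).symm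
          _ = Qm (Pn X (n + 1)) X := by rw [ih]
          _ = Pn X (n + 2) := rfl
  have hQAP : ∀ n, Qm A' (Pn X n) = Pn X n := by
    intro n
    induction n with
    | zero => exact hQAX
    | succ n ih =>
        calc Qm A' (Pn X (n + 1)) = Qm A' (Qm (Pn X n) X) := rfl
          _ = Qm (Qm A' (Pn X n)) X := (Qm_assoc _ _ _).symm
          _ = Qm (Pn X n) X := by rw [ih]
          _ = Pn X (n + 1) := rfl
  have hQPsA : ∀ n, Qm (Pn Xs n) A' = Pn Xs n := by
    intro n
    induction n with
    | zero => exact hQXsA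
    | succ n ih =>
        calc Qm (Pn Xs (n + 1)) A' = Qm (Qm (Pn Xs n) Xs) A' := rfl
          _ = Qm (Pn Xs n) (Qm Xs A') := Qm_assoc _ _ _
          _ = Qm (Pn Xs n) Xs := by rw [hQXsA]
          _ = Pn Xs (n + 1) := rfl
  -- the key computation
  have key : ∀ m n : ℕ, Qm (Pn Xs m) (Pn X n) =
      if n = m then A' else if m < n then Pn X (n - m - 1) else Pn Xs (m - n - 1) := by
    intro m
    induction m with
    | zero =>
        intro n
        cases n with
        | zero => simpa [Pn] using hfull'
        | succ j =>
            have h : Qm Xs (Pn X (j + 1)) = Pn X j := by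
              rw [← hPleft j, ← Qm_assoc, hfull', hQAP]
            rw [if_neg (by omega : ¬ j + 1 = 0), if_pos (by omega : 0 < j + 1)]
            simpa [Pn] using h
    | succ i ih =>
        intro n
        cases n with
        | zero =>
            have h : Qm (Pn Xs (i + 1)) X = Pn Xs i := by
              rw [show Pn Xs (i + 1) = Qm (Pn Xs i) Xs from rfl, Qm_assoc, hfull', hQPsA]
            rw [if_neg (by omega : ¬ (0 : ℕ) = i + 1), if_neg (by omega : ¬ i + 1 < 0)]
            simpa [Pn] using h
        | succ j =>
            have h1 : Qm (Pn Xs (i + 1)) (Pn X (j + 1)) = Qm (Pn Xs i) (Pn X j) := by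
              rw [show Pn Xs (i + 1) = Qm (Pn Xs i) Xs from rfl, ← hPleft j,
                Qm_assoc, ← Qm_assoc Xs X (Pn X j), hfull', hQAP]
            rw [h1, ih j]
            rcases Nat.lt_trichotomy i j with hlt | heq | hgt
            · rw [if_neg (by omega : ¬ j = i), if_pos hlt,
                if_neg (by omega : ¬ j + 1 = i + 1), if_pos (by omega : i + 1 < j + 1)]
              congr 1
              omega
            · subst heq
              rw [if_pos rfl, if_pos rfl]
            · rw [if_neg (by omega : ¬ j = i), if_neg (by omega : ¬ i < j),
                if_neg (by omega : ¬ j + 1 = i + 1), if_neg (by omega : ¬ i + 1 < j + 1)]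
              congr 1
              omega
  -- translation of `zpowSet`
  have hz0 : zpowSet (A : Set C) (X : Set C) 0 = (A : Set C) := by simp [zpowSet]
  have hzpos : ∀ n : ℕ, zpowSet (A : Set C) (X : Set C) ((n : ℤ) + 1) = npowSet (X : Set C) n := by
    intro n
    rw [zpowSet, if_neg (by omega), if_pos (by omega)]
    congr 1
  have hzneg : ∀ n : ℕ, zpowSet (A : Set C) (X : Set C) (-((n : ℤ) + 1))
      = npowSet ((star ·) '' (X : Set C)) n := by
    intro n
    rw [zpowSet, if_neg (by omega), if_neg (by omega)]
    congr 1
  have hnps : ∀ n, npowSet ((star ·) '' (X : Set C)) n = ((Pn Xs n : Submodule ℂ C) : Set C) :=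
    fun n => npow_eq Xs n
  -- final case analysis
  rcases k with _ | k' <;> rcases l with _ | l'
  · -- k = 0, l = 0
    push_cast
    simp only [neg_zero, sub_self]
    rw [hz0]
    exact (mulSpan_eq A' A').trans (congrArg _ hQAA)
  · -- k = 0, l = l' + 1
    push_cast
    simp only [neg_zero, sub_zero]
    rw [hz0, hzpos l', npow_eq X l']
    exact (mulSpan_eq A' (Pn X l')).trans (congrArg _ (hQAP l'))
  · -- k = k' + 1, l = 0
    push_cast
    simp only [zero_sub]
    rw [hz0, hzneg k', hnps k']
    exact (mulSpan_eq (Pn Xs k') A').trans (congrArg _ (hQPsA k'))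
  · -- k = k' + 1, l = l' + 1
    push_cast
    rw [hzneg k', hzpos l', hnps k', npow_eq X l', mulSpan_eq (Pn Xs k') (Pn X l'), key k' l']
    rcases Nat.lt_trichotomy l' k' with h | h | h
    · rw [if_neg (by omega : ¬ l' = k'), if_neg (by omega : ¬ k' < l'),
        show (l' : ℤ) + 1 - ((k' : ℤ) + 1) = -(((k' - l' - 1 : ℕ) : ℤ) + 1) by omega,
        hzneg, hnps]
    · subst h
      rw [if_pos rfl, show (l' : ℤ) + 1 - ((l' : ℤ) + 1) = 0 by ring, hz0]
      rfl
    · rw [if_neg (by omega : ¬ l' = k'), if_pos h,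
        show (l' : ℤ) + 1 - ((k' : ℤ) + 1) = ((l' - k' - 1 : ℕ) : ℤ) + 1 by omega,
        hzpos, npow_eq X]
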